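/- Let K be a real p×p matrix such that both K Kᵀ and Kᵀ K are symmetric idempotent (orthogonal projections). Let P be a symmetric idempotent p×p matrix satisfying (Kᵀ K) P = P. Then the matrix (I − K Kᵀ) + K P Kᵀ is a symmetric idempotent (orthogonal projection). -/
import Mathlib


open Matrix

/-- If `K Kᵀ` and `Kᵀ K` are symmetric idempotents and `P` is a symmetric idempotent with
`(Kᵀ K) P = P`, then `(I − K Kᵀ) + K P Kᵀ` is a symmetric idempotent. -/
theorem projection_composition {p : ℕ}
    (K P : Matrix (Fin p) (Fin p) ℝ)
    (hKKt : (K * Kᵀ)ᵀ = K * Kᵀ) (hKKt2 : (K * Kᵀ) * (K * Kᵀ) = K * Kᵀ)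
    (hKtK : (Kᵀ * K)ᵀ = Kᵀ * K) (hKtK2 : (Kᵀ * K) * (Kᵀ * K) = Kᵀ * K)
    (hPsymm : Pᵀ = P) (hPidem : P * P = P) (hKP : (Kᵀ * K) * P = P) :
    let Q : Matrix (Fin p) (Fin p) ℝ := (1 - K * Kᵀ) + K * P * Kᵀ
    Qᵀ = Q ∧ Q * Q = Q := by
  intro Q
  have hPK : P * (Kᵀ * K) = P := by
    have := congrArg Matrix.transpose hKP
    simpa [Matrix.transpose_mul, hPsymm, mul_assoc] using this
  constructor
  · show ((1 - K * Kᵀ) + K * P * Kᵀ)ᵀ = (1 - K * Kᵀ) + K * P * Kᵀ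
    simp [Matrix.transpose_add, Matrix.transpose_sub, Matrix.transpose_mul, hPsymm,
      hKKt, mul_assoc]
  · show ((1 - K * Kᵀ) + K * P * Kᵀ) * ((1 - K * Kᵀ) + K * P * Kᵀ)
        = (1 - K * Kᵀ) + K * P * Kᵀ
    have h1 : K * Kᵀ * (K * P * Kᵀ) = K * P * Kᵀ := by
      calc K * Kᵀ * (K * P * Kᵀ) = K * ((Kᵀ * K) * P) * Kᵀ := by
            simp only [mul_assoc]
        _ = K * P * Kᵀ := by rw [hKP]
    have h2 : (K * P * Kᵀ) * (K * Kᵀ) = K * P * Kᵀ := by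
      calc (K * P * Kᵀ) * (K * Kᵀ) = K * (P * (Kᵀ * K)) * Kᵀ := by
            simp only [mul_assoc]
        _ = K * P * Kᵀ := by rw [hPK]
    have h3 : (K * P * Kᵀ) * (K * P * Kᵀ) = K * P * Kᵀ := by
      calc (K * P * Kᵀ) * (K * P * Kᵀ) = K * (P * ((Kᵀ * K) * P)) * Kᵀ := by
            simp only [mul_assoc]
        _ = K * P * Kᵀ := by rw [hKP, hPidem]
    have expand : ((1 - K * Kᵀ) + K * P * Kᵀ) * ((1 - K * Kᵀ) + K * P * Kᵀ)
        = (1 - K * Kᵀ - K * Kᵀ + (K * Kᵀ) * (K * Kᵀ))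
          + (K * P * Kᵀ - (K * Kᵀ) * (K * P * Kᵀ))
          + ((K * P * Kᵀ) - (K * P * Kᵀ) * (K * Kᵀ))
          + (K * P * Kᵀ) * (K * P * Kᵀ) := by
      noncomm_ring
    rw [expand, hKKt2, h1, h2, h3]
    abel
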